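/- Let U be an n-dimensional 𝔽_q-subspace of a k-dimensional 𝔽_{q^m}-vector space 𝕍(k,q^m) such that w_U(H) < n−1 for every 𝔽_{q^m}-hyperplane H of 𝕍(k,q^m), and let U^d be a Delsarte dual of U. Assume that U is h-scattered and let ε = ε_U(t_{s−1}) be its maximum non-trivial defect (the last defect before n−k in the sequence of maximum non-zero defects of U). Then U^d is an (n−k−ε−1)-scattered subspace of 𝕍(n−k,q^m). In particular, if ε < n−k−1, then U^d is scattered. -/

import Mathlib

/-- The weight of the `𝔽_{q^m}`-subspace `T` with respect to the `𝔽_q`-subspace `U`: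
`w_U(T) = dim_{𝔽_q}(U ∩ T)`. -/
noncomputable def wt {K L V : Type*} [Field K] [Field L] [Algebra K L]
    [AddCommGroup V] [Module K V] [Module L V] [IsScalarTower K L V]
    (U : Submodule K V) (T : Submodule L V) : ℕ :=
  Module.finrank K ↥(U ⊓ T.restrictScalars K)

/-- The defect of `T` with respect to `U`: `ε_U(T) = w_U(T) − dim_{𝔽_{q^m}}(T)`. -/
noncomputable def defect {K L V : Type*} [Field K] [Field L] [Algebra K L]
    [AddCommGroup V] [Module K V] [Module L V] [IsScalarTower K L V]
    (U : Submodule K V) (T : Submodule L V) : ℤ :=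
  (wt U T : ℤ) - Module.finrank L ↥T

/-- `ε_U(r)`: the maximum defect of `r`-dimensional `𝔽_{q^m}`-subspaces w.r.t. `U`. -/
noncomputable def maxDefect {K V : Type*} (L : Type*) [Field K] [Field L] [Algebra K L]
    [AddCommGroup V] [Module K V] [Module L V] [IsScalarTower K L V]
    (U : Submodule K V) (r : ℕ) : ℤ :=
  sSup {e : ℤ | ∃ T : Submodule L V, Module.finrank L ↥T = r ∧ e = defect U T}


open Module Submodule

/-- Extension lemma: any subspace of dimension `≤ r` is contained in one of dimension `r`. -/
lemma aux_ext {F V : Type*} [Field F] [AddCommGroup V] [Module F V] [FiniteDimensional F V] :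
    ∀ (d : ℕ) (Q : Submodule F V) (r : ℕ), finrank F ↥Q + d = r → r ≤ finrank F V →
      ∃ T : Submodule F V, Q ≤ T ∧ finrank F ↥T = r := by
  intro d
  induction d with
  | zero => exact fun Q r h hr => ⟨Q, le_rfl, by omega⟩
  | succ d ih =>
    intro Q r h hr
    have hQlt : finrank F ↥Q < finrank F V := by omega
    have hQne : Q ≠ ⊤ := by
      intro e
      rw [e, finrank_top] at hQlt
      omega
    obtain ⟨x, hx⟩ : ∃ x, x ∉ Q := by
      by_contra hc
      push_neg at hc
      exact hQne (Submodule.eq_top_iff'.2 hc)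
    have hx0 : x ≠ 0 := fun e => hx (e ▸ Q.zero_mem)
    have hlt : Q < Q ⊔ (F ∙ x) := by
      refine lt_of_le_of_ne le_sup_left (fun e => hx ?_)
      exact e ▸ Submodule.mem_sup_right (Submodule.mem_span_singleton_self x)
    have h2 : finrank F ↥(Q ⊔ (F ∙ x)) + finrank F ↥(Q ⊓ (F ∙ x)) =
        finrank F ↥Q + finrank F ↥(F ∙ x) := Submodule.finrank_sup_add_finrank_inf_eq _ _
    have h3 : finrank F ↥(F ∙ x) = 1 := finrank_span_singleton hx0
    have h4 : finrank F ↥Q < finrank F ↥(Q ⊔ (F ∙ x)) := Submodule.finrank_lt_finrank_of_lt hlt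
    have h5 : finrank F ↥(Q ⊔ (F ∙ x)) = finrank F ↥Q + 1 := by omega
    obtain ⟨T, hT1, hT2⟩ := ih (Q ⊔ (F ∙ x)) r (by omega) hr
    exact ⟨T, le_trans le_sup_left hT1, hT2⟩

/-- K-linearly independent vectors inside a subgeometry `W` are L-linearly independent. -/
lemma aux_li {K L V : Type*} [Field K] [Field L] [Algebra K L]
    [AddCommGroup V] [Module K V] [Module L V] [IsScalarTower K L V]
    [FiniteDimensional L V] [FiniteDimensional K V]
    (W : Submodule K V) (hWr : finrank K ↥W = finrank L V)
    (hWs : Submodule.span L (W : Set V) = ⊤)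
    {d : ℕ} (v : Fin d → V) (hvW : ∀ i, v i ∈ W)
    (hli : LinearIndependent K v) : LinearIndependent L v := by
  set v' : Fin d → ↥W := fun i => ⟨v i, hvW i⟩ with hv'
  have hcomp : W.subtype ∘ v' = v := rfl
  have hli' : LinearIndependent K v' := LinearIndependent.of_comp W.subtype (hcomp.symm ▸ hli)
  have hs : LinearIndepOn K id (Set.range v') := (linearIndepOn_id_range_iff hli'.injective).2 hli'
  set b := hs.extend (Set.subset_univ _) with hb
  have hble : Set.range v' ⊆ b := hs.subset_extend _
  set B : Basis b K ↥W := Module.Basis.extend hs with hB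
  haveI : Fintype b := FiniteDimensional.fintypeBasisIndex B
  have hcard : Fintype.card b = finrank L V := by
    rw [← hWr, finrank_eq_card_basis B]
  set g : b → V := fun x => ((x : ↥W) : V) with hg
  have hspan : ⊤ ≤ Submodule.span L (Set.range g) := by
    rw [← hWs]
    refine Submodule.span_le.2 (fun w hw => ?_)
    have h1 : (⟨w, hw⟩ : ↥W) ∈ Submodule.span K (Set.range ⇑B) := by
      rw [B.span_eq]; trivial
    have h2 : w ∈ Submodule.map W.subtype (Submodule.span K (Set.range ⇑B)) :=
      ⟨⟨w, hw⟩, h1, rfl⟩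
    rw [Submodule.map_span] at h2
    have himg : W.subtype '' Set.range ⇑B = Set.range g := by
      rw [hB, Module.Basis.coe_extend]
      ext y
      constructor
      · rintro ⟨z, ⟨u, rfl⟩, rfl⟩; exact ⟨u, rfl⟩
      · rintro ⟨u, rfl⟩; exact ⟨u, ⟨u, rfl⟩, rfl⟩
    rw [himg] at h2
    exact Submodule.span_le_restrictScalars K L (Set.range g) h2
  have hli_g : LinearIndependent L g :=
    linearIndependent_of_top_le_span_of_card_eq_finrank hspan hcard
  set hmap : Fin d → b := fun i => ⟨v' i, hble (Set.mem_range_self i)⟩ with hhmap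
  have hinj : Function.Injective hmap := by
    intro i j hij
    apply hli'.injective
    exact congrArg Subtype.val hij
  have : g ∘ hmap = v := funext fun i => rfl
  exact this ▸ hli_g.comp hmap hinj


open Module Submodule

section Main

variable {K L Vn : Type*} [Field K] [Field L] [Algebra K L]
    [Fintype K] [Fintype L]
    [AddCommGroup Vn] [Module K Vn] [Module L Vn] [IsScalarTower K L Vn]
    [FiniteDimensional L Vn]

set_option maxHeartbeats 1000000 in
lemma statement11_key (m n k : ℕ) (hm : 0 < m) (hk : 0 < k) (hkn : k < n)
    (hmL : Module.finrank K L = m) (hVn : Module.finrank L Vn = n)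
    (W : Submodule K Vn) (hW : Module.finrank K ↥W = n)
    (hWstar : Module.finrank L ↥(Submodule.span L (W : Set Vn)) = n)
    (σ : Vn →ₗ[L] Vn →ₗ[L] L)
    (hσnd : LinearMap.BilinForm.Nondegenerate σ)
    (hσrefl : LinearMap.IsRefl σ)
    (hσW : ∀ x ∈ W, ∀ y ∈ W, σ x y ∈ (algebraMap K L).range)
    (Γ : Submodule L Vn) (hΓ : Module.finrank L ↥Γ = n - k)
    (hΓW : Γ.restrictScalars K ⊓ W = ⊥)
    (U : Submodule K (Vn ⧸ Γ)) (hU : U = Submodule.map (Γ.mkQ.restrictScalars K) W)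
    (Ud : Submodule K (Vn ⧸ LinearMap.BilinForm.orthogonal σ Γ))
    (hUd : Ud = Submodule.map ((LinearMap.BilinForm.orthogonal σ Γ).mkQ.restrictScalars K) W)
    (ε : ℕ) (hε : sSup {e : ℤ | ∃ T : Submodule L (Vn ⧸ Γ),
        Module.finrank L ↥T = k - 1 ∧ e = ((Module.finrank K
          ↥(U ⊓ T.restrictScalars K) : ℤ) - Module.finrank L ↥T)} = (ε : ℤ))
    (r : ℕ) (T : Submodule L (Vn ⧸ LinearMap.BilinForm.orthogonal σ Γ))
    (hle : r + k + ε + 1 ≤ n) (hT : Module.finrank L ↥T = r) :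
    Module.finrank K ↥(Ud ⊓ T.restrictScalars K) ≤ r := by
  haveI : FiniteDimensional K L := FiniteDimensional.of_finrank_pos (by rw [hmL]; exact hm)
  haveI : FiniteDimensional K Vn := Module.Finite.trans L Vn
  by_contra hcon
  push_neg at hcon
  have hΓp_def : LinearMap.BilinForm.orthogonal σ Γ = LinearMap.BilinForm.orthogonal σ Γ := rfl
  -- `S`: preimage of `T` in `Vn`
  set S : Submodule L Vn := T.comap (LinearMap.BilinForm.orthogonal σ Γ).mkQ with hS_def
  have hΓpS : LinearMap.BilinForm.orthogonal σ Γ ≤ S := by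
    intro x hx
    have : (LinearMap.BilinForm.orthogonal σ Γ).mkQ x = 0 := by
      have hx' : x ∈ LinearMap.ker (LinearMap.BilinForm.orthogonal σ Γ).mkQ := by
        rw [Submodule.ker_mkQ]; exact hx
      exact hx'
    show (LinearMap.BilinForm.orthogonal σ Γ).mkQ x ∈ T
    rw [this]; exact T.zero_mem
  have hΓpk : finrank L ↥(LinearMap.BilinForm.orthogonal σ Γ) = k := by
    rw [LinearMap.BilinForm.finrank_orthogonal hσnd, hΓ, hVn]
    omega
  -- dimension of S
  have hS : finrank L ↥S = r + k := by
    have f := (LinearMap.BilinForm.orthogonal σ Γ).mkQ.comp S.subtype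
    have hrange : LinearMap.range ((LinearMap.BilinForm.orthogonal σ Γ).mkQ.comp S.subtype) = T := by
      rw [LinearMap.range_comp, Submodule.range_subtype, hS_def,
        Submodule.map_comap_eq_of_surjective (Submodule.mkQ_surjective _)]
    have hker : LinearMap.ker ((LinearMap.BilinForm.orthogonal σ Γ).mkQ.comp S.subtype) = Submodule.comap S.subtype (LinearMap.BilinForm.orthogonal σ Γ) := by
      rw [LinearMap.ker_comp, Submodule.ker_mkQ]
    have h1 := LinearMap.finrank_range_add_finrank_ker ((LinearMap.BilinForm.orthogonal σ Γ).mkQ.comp S.subtype)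
    rw [hrange, hker] at h1
    have h2 : finrank L ↥(Submodule.comap S.subtype (LinearMap.BilinForm.orthogonal σ Γ)) = finrank L ↥(LinearMap.BilinForm.orthogonal σ Γ) :=
      LinearEquiv.finrank_eq (Submodule.comapSubtypeEquivOfLe hΓpS)
    rw [h2, hT, hΓpk] at h1
    omega
  -- weight of T is at most dim_K (W ⊓ S)
  set X : Submodule K Vn := W ⊓ S.restrictScalars K with hX_def
  have hwtc : finrank K ↥(Ud ⊓ T.restrictScalars K) ≤ finrank K ↥X := by
    set f : ↥X →ₗ[K] Vn ⧸ LinearMap.BilinForm.orthogonal σ Γ := ((LinearMap.BilinForm.orthogonal σ Γ).mkQ.restrictScalars K).comp X.subtype with hf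
    have hmem : ∀ x : ↥X, f x ∈ Ud ⊓ T.restrictScalars K := by
      intro x
      constructor
      · rw [hUd]; exact ⟨x.1, x.2.1, rfl⟩
      · exact x.2.2
    set f' : ↥X →ₗ[K] ↥(Ud ⊓ T.restrictScalars K) := f.codRestrict _ hmem with hf'
    have hsurj : Function.Surjective f' := by
      rintro ⟨u, hu1, hu2⟩
      rw [hUd] at hu1
      obtain ⟨w, hw, rfl⟩ := hu1
      exact ⟨⟨w, hw, hu2⟩, rfl⟩
    have := LinearMap.finrank_range_add_finrank_ker f'
    rw [LinearMap.range_eq_top.2 hsurj, finrank_top] at this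
    omega
  have hc : r + 1 ≤ finrank K ↥X := le_trans hcon hwtc
  -- pick r+1 L-linearly independent vectors in W ⊓ S
  have hbX := Module.finBasis K ↥X
  set v : Fin (r + 1) → Vn := fun i => ((hbX (Fin.castLE hc i) : ↥X) : Vn) with hv
  have hvX : ∀ i, v i ∈ X := fun i => (hbX (Fin.castLE hc i)).2
  have hliK : LinearIndependent K v := by
    have h1 : LinearIndependent K (fun i : Fin (r+1) => hbX (Fin.castLE hc i)) :=
      hbX.linearIndependent.comp _ (Fin.castLE_injective hc)
    exact h1.map' X.subtype (Submodule.ker_subtype X)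
  have hliL : LinearIndependent L v := by
    refine aux_li W (by rw [hW, hVn]) ?_ v (fun i => (hvX i).1) hliK
    apply Submodule.eq_top_of_finrank_eq
    rw [hWstar, hVn]
  -- N' = span of these vectors, P its orthogonal
  set N' : Submodule L Vn := Submodule.span L (Set.range v) with hN'_def
  have hN' : finrank L ↥N' = r + 1 := by
    rw [hN'_def, finrank_span_eq_card hliL, Fintype.card_fin]
  have hN'S : N' ≤ S := by
    rw [hN'_def, Submodule.span_le]
    rintro x ⟨i, rfl⟩
    exact (hvX i).2
  set P : Submodule L Vn := LinearMap.BilinForm.orthogonal σ N' with hP_def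
  have hP : finrank L ↥P = n - (r + 1) := by
    rw [hP_def, LinearMap.BilinForm.finrank_orthogonal hσnd, hN', hVn]
  have horthSP : LinearMap.BilinForm.orthogonal σ S ≤ P :=
    LinearMap.BilinForm.orthogonal_le hN'S
  have horthSΓ : LinearMap.BilinForm.orthogonal σ S ≤ Γ := by
    have h1 : LinearMap.BilinForm.orthogonal σ S ≤ LinearMap.BilinForm.orthogonal σ (LinearMap.BilinForm.orthogonal σ Γ) :=
      LinearMap.BilinForm.orthogonal_le hΓpS
    rwa [LinearMap.BilinForm.orthogonal_orthogonal hσnd hσrefl] at h1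
  have hoS : finrank L ↥(LinearMap.BilinForm.orthogonal σ S) = n - (r + k) := by
    rw [LinearMap.BilinForm.finrank_orthogonal hσnd, hS, hVn]
  have hPΓ : n - (r + k) ≤ finrank L ↥(P ⊓ Γ) := by
    rw [← hoS]
    exact Submodule.finrank_mono (le_inf horthSP horthSΓ)
  -- image of P in Vn ⧸ Γ has dimension ≤ k - 1
  set Q0 : Submodule L (Vn ⧸ Γ) := Submodule.map Γ.mkQ P with hQ0_def
  have hQ0 : finrank L ↥Q0 + finrank L ↥(P ⊓ Γ) = finrank L ↥P := by
    have hrange : LinearMap.range (Γ.mkQ.comp P.subtype) = Q0 := by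
      rw [LinearMap.range_comp, Submodule.range_subtype]
    have hker : LinearMap.ker (Γ.mkQ.comp P.subtype) = Submodule.comap P.subtype (P ⊓ Γ) := by
      rw [LinearMap.ker_comp, Submodule.ker_mkQ]
      ext x
      simp [x.2]
    have h1 := LinearMap.finrank_range_add_finrank_ker (Γ.mkQ.comp P.subtype)
    rw [hrange, hker] at h1
    have h2 : finrank L ↥(Submodule.comap P.subtype (P ⊓ Γ)) = finrank L ↥(P ⊓ Γ) :=
      LinearEquiv.finrank_eq (Submodule.comapSubtypeEquivOfLe inf_le_left)
    omega
  have hquot : finrank L (Vn ⧸ Γ) = k := by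
    have := Submodule.finrank_quotient_add_finrank Γ
    rw [hΓ, hVn] at this
    omega
  have hQ0le : finrank L ↥Q0 + 1 ≤ k := by omega
  -- extend to a hyperplane T' of Vn ⧸ Γ
  obtain ⟨T', hQ0T', hT'⟩ := aux_ext (k - 1 - finrank L ↥Q0) Q0 (k - 1)
    (by omega) (by omega)
  -- the kernel of the evaluation map has dimension ≥ n - (r+1) and injects into U ⊓ T'
  set A : Submodule K L := LinearMap.range (Algebra.linearMap K L) with hA_def
  have hAinj : Function.Injective (Algebra.linearMap K L) := fun a b hab => by
    exact (algebraMap K L).injective hab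
  have hA1 : finrank K ↥A = 1 := by
    rw [hA_def, ← LinearEquiv.finrank_eq (LinearEquiv.ofInjective (Algebra.linearMap K L) hAinj),
      Module.finrank_self]
  set φ : ↥W →ₗ[K] (Fin (r + 1) → ↥A) := LinearMap.pi (fun i =>
    { toFun := fun w => ⟨σ (v i) w.1, by
        rcases hσW (v i) (hvX i).1 w.1 w.2 with ⟨a, ha⟩
        exact ⟨a, by simp [ha]⟩⟩
      map_add' := by
        intro a b
        ext
        simp
      map_smul' := by
        intro a w
        ext
        show σ (v i) ((a • w : ↥W) : Vn) = a • (σ (v i) w.1)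
        rw [Submodule.coe_smul, algebra_compatible_smul L a (w : Vn), map_smul,
          Algebra.smul_def, Algebra.smul_def]
        rfl }) with hφ_def
  have hkerφ : n ≤ finrank K ↥(LinearMap.ker φ) + (r + 1) := by
    have h1 := LinearMap.finrank_range_add_finrank_ker φ
    have h2 : finrank K ↥(LinearMap.range φ) ≤ r + 1 := by
      have h3 : finrank K (Fin (r + 1) → ↥A) = r + 1 := by
        rw [Module.finrank_pi_fintype, hA1]
        simp
      calc finrank K ↥(LinearMap.range φ) ≤ finrank K (Fin (r + 1) → ↥A) :=
            (LinearMap.range φ).finrank_le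
        _ = r + 1 := h3
    rw [hW] at h1
    omega
  -- elements of ker φ lie in P
  have hkerP : ∀ x : ↥(LinearMap.ker φ), ((x : ↥W) : Vn) ∈ P := by
    rintro ⟨⟨x, hxW⟩, hxker⟩
    rw [LinearMap.mem_ker] at hxker
    show (⟨x, hxW⟩ : ↥W).1 ∈ P
    rw [hP_def]
    intro g hg
    have hgen : ∀ i, σ (v i) x = 0 := by
      intro i
      have := congrFun hxker i
      rw [hφ_def] at this
      exact congrArg Subtype.val this
    refine Submodule.span_induction ?_ ?_ ?_ ?_ hg
    · rintro y ⟨i, rfl⟩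
      exact hgen i
    · show σ 0 x = 0
      simp
    · intro a b _ _ ha hb
      show σ (a + b) x = 0
      rw [map_add, LinearMap.add_apply, ha, hb, add_zero]
    · intro c a _ ha
      show σ (c • a) x = 0
      rw [map_smul, LinearMap.smul_apply, ha, smul_zero]
  -- the injection ker φ ↪ U ⊓ T'
  have hwt : n ≤ finrank K ↥(U ⊓ T'.restrictScalars K) + (r + 1) := by
    set j : ↥(LinearMap.ker φ) →ₗ[K] Vn ⧸ Γ :=
      (Γ.mkQ.restrictScalars K).comp (W.subtype.comp (LinearMap.ker φ).subtype) with hj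
    have hjmem : ∀ x, j x ∈ U ⊓ T'.restrictScalars K := by
      intro x
      constructor
      · rw [hU]; exact ⟨((x : ↥W) : Vn), (x : ↥W).2, rfl⟩
      · have : Γ.mkQ ((x : ↥W) : Vn) ∈ Q0 := Submodule.mem_map_of_mem (hkerP x)
        exact hQ0T' this
    have hjinj : Function.Injective (j.codRestrict _ hjmem) := by
      intro a b hab
      have h1 : j a = j b := congrArg Subtype.val hab
      have h2 : Γ.mkQ (((a : ↥W) : Vn) - ((b : ↥W) : Vn)) = 0 := by
        rw [map_sub]
        show j a - j b = 0
        rw [h1, sub_self]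
      have h2' : ((a : ↥W) : Vn) - ((b : ↥W) : Vn) ∈ LinearMap.ker Γ.mkQ :=
        LinearMap.mem_ker.2 h2
      rw [Submodule.ker_mkQ] at h2'
      have h3 : ((a : ↥W) : Vn) - ((b : ↥W) : Vn) ∈ Γ.restrictScalars K ⊓ W :=
        ⟨h2', W.sub_mem (a : ↥W).2 (b : ↥W).2⟩
      rw [hΓW] at h3
      have h4 : ((a : ↥W) : Vn) = ((b : ↥W) : Vn) := by
        have h5 := (Submodule.mem_bot K).1 h3
        exact sub_eq_zero.1 h5
      exact Subtype.ext (Subtype.ext h4)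
    have := LinearMap.finrank_le_finrank_of_injective hjinj
    omega
  -- defect bound from hε
  have hbdd : BddAbove {e : ℤ | ∃ T : Submodule L (Vn ⧸ Γ),
      Module.finrank L ↥T = k - 1 ∧ e = ((Module.finrank K
        ↥(U ⊓ T.restrictScalars K) : ℤ) - Module.finrank L ↥T)} := by
    refine ⟨(finrank K (Vn ⧸ Γ) : ℤ), ?_⟩
    rintro e ⟨T0, hT0, rfl⟩
    have h1 : finrank K ↥(U ⊓ T0.restrictScalars K) ≤ finrank K (Vn ⧸ Γ) :=
      Submodule.finrank_le _
    have h2 : (0 : ℤ) ≤ (finrank L ↥T0 : ℤ) := Int.natCast_nonneg _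
    omega
  have hmem : ((finrank K ↥(U ⊓ T'.restrictScalars K) : ℤ) - finrank L ↥T')
      ∈ {e : ℤ | ∃ T : Submodule L (Vn ⧸ Γ),
        Module.finrank L ↥T = k - 1 ∧ e = ((Module.finrank K
          ↥(U ⊓ T.restrictScalars K) : ℤ) - Module.finrank L ↥T)} := ⟨T', hT', rfl⟩
  have hdle := le_csSup hbdd hmem
  rw [hε] at hdle
  rw [hT'] at hdle
  omega

end Main


/-- Theorem 1.35: the Delsarte dual of an `h`-scattered subspace with maximum
non-trivial defect `ε = ε_U(t_{s−1})` (which, as every hyperplane has weight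
`< n−1`, equals `ε_U(k−1)`) is `(n−k−ε−1)`-scattered. -/
theorem statement11 {K L Vn : Type*} [Field K] [Field L] [Algebra K L]
    [Fintype K] [Fintype L]
    [AddCommGroup Vn] [Module K Vn] [Module L Vn] [IsScalarTower K L Vn]
    [FiniteDimensional L Vn]
    (m n k : ℕ) (hm : 0 < m) (hk : 0 < k) (hkn : k < n)
    (hmL : Module.finrank K L = m) (hVn : Module.finrank L Vn = n)
    (W : Submodule K Vn) (hW : Module.finrank K ↥W = n)
    (hWstar : Module.finrank L ↥(Submodule.span L (W : Set Vn)) = n)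
    (σ : Vn →ₗ[L] Vn →ₗ[L] L)
    (hσnd : LinearMap.BilinForm.Nondegenerate σ)
    (hσrefl : LinearMap.IsRefl σ)
    (hσW : ∀ x ∈ W, ∀ y ∈ W, σ x y ∈ (algebraMap K L).range)
    (hσ'nd : ∀ x ∈ W, (∀ y ∈ W, σ x y = 0) → x = 0)
    (Γ : Submodule L Vn) (hΓ : Module.finrank L ↥Γ = n - k)
    (hΓW : Γ.restrictScalars K ⊓ W = ⊥)
    (U : Submodule K (Vn ⧸ Γ)) (hU : U = Submodule.map (Γ.mkQ.restrictScalars K) W)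
    (hUdim : Module.finrank K ↥U = n)
    (Ud : Submodule K (Vn ⧸ LinearMap.BilinForm.orthogonal σ Γ))
    (hUd : Ud = Submodule.map ((LinearMap.BilinForm.orthogonal σ Γ).mkQ.restrictScalars K) W)
    -- every hyperplane of `𝕍(k,q^m)` has weight `< n − 1` w.r.t. `U`
    (hhyp : ∀ H : Submodule L (Vn ⧸ Γ),
      Module.finrank L ↥H + 1 = k → wt U H + 1 < n)
    -- `U` is `h`-scattered
    (h : ℕ) (hh1 : 1 ≤ h) (hhk : h ≤ k)
    (hscat : ∀ T : Submodule L (Vn ⧸ Γ), Module.finrank L ↥T = h → wt U T ≤ h)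
    -- `ε = ε_U(t_{s−1}) = ε_U(k−1)` is the maximum non-trivial defect of `U`
    (ε : ℕ) (hε : maxDefect L U (k - 1) = (ε : ℤ)) (hεlt : ε < n - k) :
    -- `U^d` is `(n−k−ε−1)`-scattered
    (∀ T : Submodule L (Vn ⧸ LinearMap.BilinForm.orthogonal σ Γ),
      Module.finrank L ↥T = n - k - ε - 1 → wt Ud T ≤ n - k - ε - 1) ∧
    -- in particular, if `ε < n−k−1` then `U^d` is scattered
    (ε < n - k - 1 →
      ∀ T : Submodule L (Vn ⧸ LinearMap.BilinForm.orthogonal σ Γ),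
        Module.finrank L ↥T = 1 → wt Ud T ≤ 1) := by
  have hε' : sSup {e : ℤ | ∃ T : Submodule L (Vn ⧸ Γ),
      Module.finrank L ↥T = k - 1 ∧ e = ((Module.finrank K
        ↥(U ⊓ T.restrictScalars K) : ℤ) - Module.finrank L ↥T)} = (ε : ℤ) := hε
  constructor
  · intro T hT
    exact statement11_key m n k hm hk hkn hmL hVn W hW hWstar σ hσnd hσrefl hσW Γ hΓ hΓW
      U hU Ud hUd ε hε' (n - k - ε - 1) T (by omega) hT
  · intro hε2 T hT
    exact statement11_key m n k hm hk hkn hmL hVn W hW hWstar σ hσnd hσrefl hσW Γ hΓ hΓW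
      U hU Ud hUd ε hε' 1 T (by omega) hT
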